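/- arXiv:1004.1821 — 2 statements merged into one kernel-verified Lean document; each statement's English description precedes it below -/
import Mathlib

section
/- Let A be an n×N real matrix satisfying aRIP(2k; L₂, U₂) and aRIP(4k; L₄, U₄) with L₂ < 1. Let x ∈ ℝ^N be k-sparse, let e ∈ ℝⁿ, and set y = Ax + e. Let v ∈ ℝ^N be k-sparse and set r := v − x. Let Ω be an index set with |Ω| = 2k selecting 2k largest-magnitude entries of A*(y − Av). Then ‖r_{Ω^c}‖₂ ≤ ((L₂ + U₂ + L₄ + U₄)/(2(1−L₂)))·‖r‖₂ + (2√(1+U₂)/(1−L₂))·‖e‖₂. -/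
open Finset Matrix

noncomputable def enorm {α : Type*} [Fintype α] (v : α → ℝ) : ℝ :=
  Real.sqrt (∑ i, (v i) ^ 2)

def restr {N : ℕ} (I : Finset (Fin N)) (x : Fin N → ℝ) : Fin N → ℝ :=
  fun i => if i ∈ I then x i else 0

def sparse {N : ℕ} (k : ℕ) (x : Fin N → ℝ) : Prop :=
  (Finset.univ.filter fun i => x i ≠ 0).card ≤ k

def aRIP {n N : ℕ} (A : Matrix (Fin n) (Fin N) ℝ) (m : ℕ) (L U : ℝ) : Prop :=
  ∀ x : Fin N → ℝ, sparse m x →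
    (1 - L) * _root_.enorm x ^ 2 ≤ _root_.enorm (A.mulVec x) ^ 2 ∧
      _root_.enorm (A.mulVec x) ^ 2 ≤ (1 + U) * _root_.enorm x ^ 2

def selects {N : ℕ} (T : Finset (Fin N)) (v : Fin N → ℝ) : Prop :=
  ∀ i ∈ T, ∀ j ∉ T, |v j| ≤ |v i|

def subCols {n N : ℕ} (A : Matrix (Fin n) (Fin N) ℝ) (I : Finset (Fin N)) :
    Matrix (Fin n) I ℝ :=
  fun r c => A r (c : Fin N)

noncomputable def gram {n N : ℕ} (A : Matrix (Fin n) (Fin N) ℝ) (I : Finset (Fin N)) :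
    Matrix I I ℝ :=
  (subCols A I)ᵀ * subCols A I

noncomputable def pinvApply {n N : ℕ} (A : Matrix (Fin n) (Fin N) ℝ) (I : Finset (Fin N))
    (y : Fin n → ℝ) : I → ℝ :=
  ((gram A I)⁻¹ * (subCols A I)ᵀ).mulVec y

noncomputable def pinvVec {n N : ℕ} (A : Matrix (Fin n) (Fin N) ℝ) (I : Finset (Fin N))
    (y : Fin n → ℝ) : Fin N → ℝ :=
  fun i => if h : i ∈ I then pinvApply A I y ⟨i, h⟩ else 0

/-! ### Auxiliary lemmas -/

lemma enorm_nonneg' {α : Type*} [Fintype α] (v : α → ℝ) : 0 ≤ _root_.enorm v :=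
  Real.sqrt_nonneg _

lemma enorm_sq' {α : Type*} [Fintype α] (v : α → ℝ) : _root_.enorm v ^ 2 = ∑ i, (v i) ^ 2 :=
  Real.sq_sqrt (Finset.sum_nonneg fun i _ => sq_nonneg _)

lemma enorm_eq_zero_aux' {α : Type*} [Fintype α] {v : α → ℝ} (h : _root_.enorm v = 0) :
    ∀ i, v i = 0 := by
  have h2 : ∑ i, (v i)^2 = 0 := by rw [← enorm_sq', h]; ring
  intro i
  have := (Finset.sum_eq_zero_iff_of_nonneg (fun i _ => sq_nonneg (v i))).mp h2 i (mem_univ i)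
  exact pow_eq_zero_iff (by norm_num) |>.mp this

lemma enorm_neg' {α : Type*} [Fintype α] (v : α → ℝ) :
    _root_.enorm (fun i => -v i) = _root_.enorm v := by
  unfold _root_.enorm; congr 1; apply Finset.sum_congr rfl; intro i _; ring

lemma cs' {α : Type*} [Fintype α] (v w : α → ℝ) :
    ∑ i, v i * w i ≤ _root_.enorm v * _root_.enorm w := by
  calc ∑ i, v i * w i ≤ Real.sqrt ((∑ i, v i ^2) * (∑ i, w i ^2)) := by
        rcases le_or_gt (∑ i, v i * w i) 0 with h0 | h0
        · exact h0.trans (Real.sqrt_nonneg _)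
        · have := Finset.sum_mul_sq_le_sq_mul_sq (univ : Finset α) v w
          calc ∑ i, v i * w i = Real.sqrt ((∑ i, v i * w i)^2) :=
                (Real.sqrt_sq h0.le).symm
            _ ≤ _ := Real.sqrt_le_sqrt this
    _ = _root_.enorm v * _root_.enorm w := Real.sqrt_mul (Finset.sum_nonneg fun i _ => sq_nonneg _) _

lemma cs_abs' {α : Type*} [Fintype α] (v w : α → ℝ) :
    |∑ i, v i * w i| ≤ _root_.enorm v * _root_.enorm w := by
  rw [abs_le]
  refine ⟨?_, cs' v w⟩
  have h := cs' (fun i => -v i) w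
  rw [enorm_neg'] at h
  have : ∑ i, (fun i => -v i) i * w i = -∑ i, v i * w i := by
    rw [← Finset.sum_neg_distrib]; apply Finset.sum_congr rfl; intro i _; ring
  rw [this] at h
  linarith

lemma le_of_sq_le' {a b : ℝ} (ha : 0 ≤ a) (hb : 0 ≤ b) (h : a^2 ≤ b^2) : a ≤ b := by
  nlinarith

lemma sparse_of_subset' {N : ℕ} {m : ℕ} {f : Fin N → ℝ} {I : Finset (Fin N)}
    (hsub : ∀ i, f i ≠ 0 → i ∈ I) (h : I.card ≤ m) : sparse m f := by
  refine le_trans (Finset.card_le_card ?_) h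
  intro i hi
  exact hsub i (by simpa using hi)

lemma mulVec_comb' {n N : ℕ} (A : Matrix (Fin n) (Fin N) ℝ) (c d : ℝ) (p q : Fin N → ℝ) :
    A.mulVec (fun i => c * p i + d * q i)
      = fun j => c * A.mulVec p j + d * A.mulVec q j := by
  funext j
  simp only [Matrix.mulVec, dotProduct, mul_add, Finset.sum_add_distrib, Finset.mul_sum]
  congr 1 <;> apply Finset.sum_congr rfl <;> intro i _ <;> ring

lemma dot_transpose' {n N : ℕ} (A : Matrix (Fin n) (Fin N) ℝ) (c : Fin n → ℝ)
    (z : Fin N → ℝ) :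
    ∑ j, Aᵀ.mulVec c j * z j = ∑ i, c i * A.mulVec z i := by
  simp only [Matrix.mulVec, dotProduct, Matrix.transpose_apply, Finset.sum_mul,
    Finset.mul_sum]
  rw [Finset.sum_comm]
  apply Finset.sum_congr rfl; intro i _; apply Finset.sum_congr rfl; intro j _; ring

lemma enorm_restr_sq' {N : ℕ} (I : Finset (Fin N)) (x : Fin N → ℝ) :
    _root_.enorm (restr I x) ^ 2 = ∑ i ∈ I, x i ^ 2 := by
  rw [enorm_sq']
  rw [show (∑ i : Fin N, restr I x i ^ 2) = ∑ i : Fin N, (if i ∈ I then x i ^ 2 else 0) from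
    Finset.sum_congr rfl fun i _ => by unfold restr; split <;> simp]
  simp [Finset.sum_ite_mem]

lemma ripIP_le' {n N m : ℕ} {A : Matrix (Fin n) (Fin N) ℝ} {L U : ℝ}
    (h : aRIP A m L U) (a b : Fin N → ℝ)
    (hd : ∀ i, a i = 0 ∨ b i = 0)
    (hs : ∀ (c d : ℝ), sparse m (fun i => c * a i + d * b i)) :
    ∑ j, A.mulVec a j * A.mulVec b j ≤ ((L + U) / 2) * _root_.enorm a * _root_.enorm b := by
  set X := ∑ j, A.mulVec a j * A.mulVec b j with hX
  have key : ∀ t : ℝ, 4 * t * X ≤ (L + U) * (t ^ 2 * _root_.enorm a ^ 2 + _root_.enorm b ^ 2) := by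
    intro t
    have hp := (h _ (hs t 1)).2
    have hq := (h _ (hs t (-1))).1
    have hnp : _root_.enorm (fun i => t * a i + 1 * b i) ^ 2 = t ^ 2 * _root_.enorm a ^ 2 + _root_.enorm b ^ 2 := by
      rw [enorm_sq', enorm_sq', enorm_sq', Finset.mul_sum, ← Finset.sum_add_distrib]
      apply Finset.sum_congr rfl; intro i _
      rcases hd i with h0 | h0 <;> rw [h0] <;> ring
    have hnq : _root_.enorm (fun i => t * a i + (-1) * b i) ^ 2
        = t ^ 2 * _root_.enorm a ^ 2 + _root_.enorm b ^ 2 := by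
      rw [enorm_sq', enorm_sq', enorm_sq', Finset.mul_sum, ← Finset.sum_add_distrib]
      apply Finset.sum_congr rfl; intro i _
      rcases hd i with h0 | h0 <;> rw [h0] <;> ring
    have hApq : _root_.enorm (A.mulVec (fun i => t * a i + 1 * b i)) ^ 2
        - _root_.enorm (A.mulVec (fun i => t * a i + (-1) * b i)) ^ 2 = 4 * t * X := by
      rw [mulVec_comb', mulVec_comb', enorm_sq', enorm_sq', hX, Finset.mul_sum,
        ← Finset.sum_sub_distrib]
      apply Finset.sum_congr rfl; intro j _; ring
    rw [hnp] at hp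
    rw [hnq] at hq
    linarith
  rcases eq_or_lt_of_le (enorm_nonneg' a) with ha | ha
  · have hz : ∀ j, A.mulVec a j = 0 := by
      intro j
      have h0 : ∀ i, a i = 0 := enorm_eq_zero_aux' ha.symm
      have : a = fun _ => (0:ℝ) := funext h0
      rw [this]
      simp [Matrix.mulVec, dotProduct]
    have : X = 0 := by rw [hX]; apply Finset.sum_eq_zero; intro j _; rw [hz j]; ring
    rw [this, ← ha]
    nlinarith [enorm_nonneg' b]
  rcases eq_or_lt_of_le (enorm_nonneg' b) with hb | hb
  · have h0 : ∀ i, b i = 0 := enorm_eq_zero_aux' hb.symm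
    have hz : ∀ j, A.mulVec b j = 0 := by
      intro j
      have : b = fun _ => (0:ℝ) := funext h0
      rw [this]; simp [Matrix.mulVec, dotProduct]
    have hX0 : X = 0 := by rw [hX]; apply Finset.sum_eq_zero; intro j _; rw [hz j]; ring
    rw [hX0, ← hb]
    nlinarith [enorm_nonneg' a]
  · have hkey := key (_root_.enorm b / _root_.enorm a)
    have hane : _root_.enorm a ≠ 0 := ne_of_gt ha
    have h1 : (_root_.enorm b / _root_.enorm a) ^ 2 * _root_.enorm a ^ 2 = _root_.enorm b ^ 2 := by
      field_simp
    rw [h1] at hkey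
    have h2 : 4 * (_root_.enorm b / _root_.enorm a) * X ≤ (L + U) * (2 * _root_.enorm b ^ 2) := by linarith
    have h4 : (4 * (_root_.enorm b / _root_.enorm a) * X) * _root_.enorm a
        ≤ ((L + U) * (2 * _root_.enorm b ^ 2)) * _root_.enorm a := mul_le_mul_of_nonneg_right h2 ha.le
    have e1 : (4 * (_root_.enorm b / _root_.enorm a) * X) * _root_.enorm a = 4 * _root_.enorm b * X := by
      field_simp
    rw [e1] at h4
    refine le_of_mul_le_mul_left ?_ (show (0:ℝ) < 4 * _root_.enorm b by positivity)
    calc 4 * _root_.enorm b * X ≤ (L + U) * (2 * _root_.enorm b ^ 2) * _root_.enorm a := h4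
      _ = 4 * _root_.enorm b * ((L + U) / 2 * _root_.enorm a * _root_.enorm b) := by ring

lemma ripIP_abs' {n N m : ℕ} {A : Matrix (Fin n) (Fin N) ℝ} {L U : ℝ}
    (h : aRIP A m L U) (a b : Fin N → ℝ)
    (hd : ∀ i, a i = 0 ∨ b i = 0)
    (hs : ∀ (c d : ℝ), sparse m (fun i => c * a i + d * b i)) :
    |∑ j, A.mulVec a j * A.mulVec b j| ≤ ((L + U) / 2) * _root_.enorm a * _root_.enorm b := by
  rw [abs_le]
  refine ⟨?_, ripIP_le' h a b hd hs⟩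
  have hd' : ∀ i, a i = 0 ∨ (fun i => -b i) i = 0 := by
    intro i; rcases hd i with h0 | h0
    · exact Or.inl h0
    · exact Or.inr (by simp [h0])
  have hs' : ∀ (c d : ℝ), sparse m (fun i => c * a i + d * (fun i => -b i) i) := by
    intro c d
    have : (fun i => c * a i + d * (fun i => -b i) i) = fun i => c * a i + (-d) * b i := by
      funext i; ring
    rw [this]; exact hs c (-d)
  have h2 := ripIP_le' h a (fun i => -b i) hd' hs'
  rw [enorm_neg'] at h2
  have hmb : A.mulVec (fun i => -b i) = fun j => -(A.mulVec b j) := by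
    have e1 : (fun i => -b i) = fun i => (-1 : ℝ) * b i + 0 * b i := by funext i; ring
    rw [e1, mulVec_comb']
    funext j; ring
  rw [hmb] at h2
  have e2 : ∑ j, A.mulVec a j * (-(A.mulVec b j)) = -∑ j, A.mulVec a j * A.mulVec b j := by
    rw [← Finset.sum_neg_distrib]; apply Finset.sum_congr rfl; intro j _; ring
  rw [e2] at h2
  linarith

lemma final_div' (p q R E D : ℝ) (hD : D ≠ 0) :
    (p/2 * R + 2*q*E)/D = p/(2*D)*R + 2*q/D*E := by
  field_simp

lemma sum_sq_sel' {N : ℕ} (u : Fin N → ℝ) (Ω : Finset (Fin N)) (hsel : selects Ω u)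
    (P S : Finset (Fin N)) (hP : ∀ i ∈ P, i ∉ Ω) (hS : S ⊆ Ω) (hcard : P.card = S.card) :
    ∑ i ∈ P, u i ^ 2 ≤ ∑ i ∈ S, u i ^ 2 := by
  have σ : (P : Finset (Fin N)) ≃ (S : Finset (Fin N)) := Finset.equivOfCardEq hcard
  calc ∑ i ∈ P, u i ^2 = ∑ i : P, u i ^2 := (Finset.sum_coe_sort P (fun i => u i ^ 2)).symm
    _ = ∑ i : S, u (σ.symm i) ^ 2 := (Equiv.sum_comp σ.symm (fun j : P => u (j:Fin N) ^2)).symm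
    _ ≤ ∑ i : S, u i ^ 2 := by
        apply Finset.sum_le_sum
        intro i _
        have h1 := hsel i (hS i.2) (σ.symm i) (hP _ (σ.symm i).2)
        calc u (σ.symm i : Fin N) ^ 2 = |u (σ.symm i : Fin N)| ^ 2 := (sq_abs _).symm
          _ ≤ |u (i : Fin N)| ^ 2 := pow_le_pow_left₀ (abs_nonneg _) h1 2
          _ = u (i : Fin N) ^ 2 := sq_abs _
    _ = ∑ i ∈ S, u i ^ 2 := Finset.sum_coe_sort S (fun i => u i ^ 2)

theorem stmt9 {n N k : ℕ} (A : Matrix (Fin n) (Fin N) ℝ)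
    (L₂ U₂ L₄ U₄ : ℝ) (hL₂0 : 0 ≤ L₂) (hU₂0 : 0 ≤ U₂) (hL₄0 : 0 ≤ L₄) (hU₄0 : 0 ≤ U₄)
    (h₂ : aRIP A (2 * k) L₂ U₂) (h₄ : aRIP A (4 * k) L₄ U₄) (hL₂1 : L₂ < 1)
    (x : Fin N → ℝ) (hx : sparse k x) (e y : Fin n → ℝ)
    (hy : y = fun i => A.mulVec x i + e i)
    (v : Fin N → ℝ) (hv : sparse k v)
    (Ω : Finset (Fin N)) (hΩcard : Ω.card = 2 * k)
    (hΩsel : selects Ω (Aᵀ.mulVec (fun i => y i - A.mulVec v i))) :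
    _root_.enorm (restr Ωᶜ (fun i => v i - x i)) ≤
      ((L₂ + U₂ + L₄ + U₄) / (2 * (1 - L₂))) * _root_.enorm (fun i => v i - x i)
        + (2 * Real.sqrt (1 + U₂) / (1 - L₂)) * _root_.enorm e := by
  have h1L : (0:ℝ) < 1 - L₂ := by linarith
  have hU₂1 : (0:ℝ) ≤ 1 + U₂ := by linarith
  set r : Fin N → ℝ := fun i => v i - x i with hr
  -- rewrite the residual
  have hc : (fun i => y i - A.mulVec v i) = fun i => e i - A.mulVec r i := by
    funext i
    rw [hy]
    have hAr : A.mulVec r = fun j => 1 * A.mulVec v j + (-1) * A.mulVec x j := by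
      rw [show r = (fun i => 1 * v i + (-1) * x i) from funext fun i => by
        rw [hr]; ring, mulVec_comb']
    have := congrFun hAr i
    simp only at this ⊢
    linarith
  rw [hc] at hΩsel
  set u : Fin N → ℝ := Aᵀ.mulVec (fun i => e i - A.mulVec r i) with hu
  -- support of r
  set T : Finset (Fin N) := univ.filter (fun i => r i ≠ 0) with hT
  have hTmem : ∀ i, r i ≠ 0 → i ∈ T := fun i hi => by
    rw [hT]; simp [hi]
  have hTcard : T.card ≤ 2 * k := by
    have hsub : T ⊆ (univ.filter fun i => v i ≠ 0) ∪ (univ.filter fun i => x i ≠ 0) := by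
      intro i hi
      simp only [hT, mem_filter, mem_union, mem_univ, true_and] at hi ⊢
      by_contra hcon
      push_neg at hcon
      apply hi
      rw [hr]
      simp [hcon.1, hcon.2]
    calc T.card ≤ _ := Finset.card_le_card hsub
      _ ≤ _ + _ := Finset.card_union_le _ _
      _ ≤ k + k := add_le_add hv hx
      _ = 2 * k := by ring
  have hr2 : sparse (2*k) r := hTcard
  -- operator norm bound on 2k-sparse vectors
  have hAup : ∀ z : Fin N → ℝ, sparse (2*k) z →
      _root_.enorm (A.mulVec z) ≤ Real.sqrt (1+U₂) * _root_.enorm z := by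
    intro z hz
    have h := (h₂ z hz).2
    calc _root_.enorm (A.mulVec z) = Real.sqrt (_root_.enorm (A.mulVec z)^2) :=
          (Real.sqrt_sq (enorm_nonneg' _)).symm
      _ ≤ Real.sqrt ((1+U₂) * _root_.enorm z^2) := Real.sqrt_le_sqrt h
      _ = Real.sqrt (1+U₂) * _root_.enorm z := by
          rw [Real.sqrt_mul hU₂1, Real.sqrt_sq (enorm_nonneg' _)]
  -- dot product identity
  have hu_eq : ∀ z : Fin N → ℝ, ∑ j, u j * z j
      = ∑ i, e i * A.mulVec z i - ∑ i, A.mulVec r i * A.mulVec z i := by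
    intro z
    rw [hu, dot_transpose', ← Finset.sum_sub_distrib]
    apply Finset.sum_congr rfl; intro i _; ring
  -- choose the comparison set S
  have hcards : (T \ Ω).card ≤ (Ω \ T).card := by
    have a1 := Finset.card_sdiff_add_card_inter T Ω
    have a2 := Finset.card_sdiff_add_card_inter Ω T
    rw [Finset.inter_comm] at a2
    omega
  obtain ⟨S, hSsub, hScard⟩ := Finset.exists_subset_card_eq hcards
  have hSΩ : S ⊆ Ω := hSsub.trans Finset.sdiff_subset
  have hScard2k : S.card ≤ 2*k := le_trans (Finset.card_le_card hSΩ) hΩcard.le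
  have hz_sp : sparse (2*k) (restr S u) := by
    apply sparse_of_subset' (I := S) _ hScard2k
    intro i hi
    by_contra hmem
    apply hi
    unfold restr
    rw [if_neg hmem]
  have hdisj_rz : ∀ i, r i = 0 ∨ restr S u i = 0 := by
    intro i
    by_cases h0 : r i = 0
    · exact Or.inl h0
    · right
      have hiT : i ∈ T := hTmem i h0
      have hns : i ∉ S := fun hiS => (Finset.mem_sdiff.mp (hSsub hiS)).2 hiT
      unfold restr
      rw [if_neg hns]
  have hcomb4 : ∀ c d : ℝ, sparse (4*k) (fun i => c * r i + d * restr S u i) := by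
    intro c d
    apply sparse_of_subset' (I := T ∪ S)
    · intro i hi
      by_contra hcon
      rw [Finset.mem_union] at hcon
      push_neg at hcon
      apply hi
      have h1 : r i = 0 := by by_contra hh; exact hcon.1 (hTmem i hh)
      have h2 : restr S u i = 0 := by unfold restr; rw [if_neg hcon.2]
      rw [h1, h2]; ring
    · calc (T ∪ S).card ≤ T.card + S.card := Finset.card_union_le _ _
        _ ≤ 2*k + 2*k := add_le_add hTcard hScard2k
        _ = 4*k := by ring
  -- bound on the comparison block
  have hz_bound : _root_.enorm (restr S u)
      ≤ (L₄+U₄)/2 * _root_.enorm r + Real.sqrt (1+U₂) * _root_.enorm e := by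
    have h1 : _root_.enorm (restr S u) ^ 2 = ∑ i, u i * restr S u i := by
      rw [enorm_sq']
      apply Finset.sum_congr rfl; intro i _
      by_cases hiS : i ∈ S
      · unfold restr; rw [if_pos hiS]; ring
      · unfold restr; rw [if_neg hiS]; ring
    have h2 := hu_eq (restr S u)
    have h3 : ∑ i, e i * A.mulVec (restr S u) i
        ≤ _root_.enorm e * (Real.sqrt (1+U₂) * _root_.enorm (restr S u)) :=
      (cs' e _).trans (mul_le_mul_of_nonneg_left (hAup _ hz_sp) (enorm_nonneg' e))
    have h4 : -(∑ i, A.mulVec r i * A.mulVec (restr S u) i)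
        ≤ (L₄+U₄)/2 * _root_.enorm r * _root_.enorm (restr S u) := by
      have hab := (abs_le.mp (ripIP_abs' h₄ r (restr S u) hdisj_rz hcomb4)).1
      linarith
    have h5 : _root_.enorm (restr S u) ^2
        ≤ ((L₄+U₄)/2 * _root_.enorm r + Real.sqrt (1+U₂) * _root_.enorm e) * _root_.enorm (restr S u) := by
      rw [h1, h2]
      nlinarith [h3, h4]
    have hB0 : (0:ℝ) ≤ (L₄+U₄)/2 * _root_.enorm r + Real.sqrt (1+U₂) * _root_.enorm e :=
      add_nonneg (mul_nonneg (by positivity) (enorm_nonneg' r))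
        (mul_nonneg (Real.sqrt_nonneg _) (enorm_nonneg' e))
    rcases le_or_gt (_root_.enorm (restr S u)) 0 with hez | hez
    · linarith [enorm_nonneg' (restr S u)]
    · nlinarith [h5]
  -- selection comparison
  have hsel_le : _root_.enorm (restr (T\Ω) u) ≤ _root_.enorm (restr S u) := by
    apply le_of_sq_le' (enorm_nonneg' _) (enorm_nonneg' _)
    rw [enorm_restr_sq', enorm_restr_sq']
    exact sum_sq_sel' u Ω hΩsel (T\Ω) S (fun i hi => (Finset.mem_sdiff.mp hi).2) hSΩ
      hScard.symm
  -- decomposition r = restr Ω r + restr Ωᶜ r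
  have hdec : ∀ j, A.mulVec r j = A.mulVec (restr Ω r) j + A.mulVec (restr Ωᶜ r) j := by
    have hsplit : r = fun i => 1 * restr Ω r i + 1 * restr Ωᶜ r i := by
      funext i
      unfold restr
      by_cases hiΩ : i ∈ Ω
      · rw [if_pos hiΩ, if_neg (by simp [Finset.mem_compl, hiΩ])]; ring
      · rw [if_neg hiΩ, if_pos (Finset.mem_compl.mpr hiΩ)]; ring
    intro j
    conv_lhs => rw [hsplit]
    rw [mulVec_comb']; ring
  have hw_supp : ∀ i, restr Ωᶜ r i ≠ 0 → i ∈ T ∧ i ∉ Ω := by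
    intro i hi
    by_cases hiΩ : i ∈ Ω
    · exfalso; apply hi; unfold restr; rw [if_neg (by simp [Finset.mem_compl, hiΩ])]
    · refine ⟨?_, hiΩ⟩
      apply hTmem
      intro hr0
      apply hi
      unfold restr
      split <;> simp [hr0]
  have hw_sp : sparse (2*k) (restr Ωᶜ r) :=
    sparse_of_subset' (fun i hi => (hw_supp i hi).1) hTcard
  have hdisj_Ωw : ∀ i, restr Ω r i = 0 ∨ restr Ωᶜ r i = 0 := by
    intro i
    by_cases hiΩ : i ∈ Ω
    · right; unfold restr; rw [if_neg (by simp [Finset.mem_compl, hiΩ])]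
    · left; unfold restr; rw [if_neg hiΩ]
  have hcomb2 : ∀ c d : ℝ, sparse (2*k) (fun i => c * restr Ω r i + d * restr Ωᶜ r i) := by
    intro c d
    apply sparse_of_subset' (I := T) _ hTcard
    intro i hi
    by_contra hiT
    apply hi
    have h1 : r i = 0 := by by_contra hh; exact hiT (hTmem i hh)
    have h2 : restr Ω r i = 0 := by unfold restr; split <;> simp [h1]
    have h3 : restr Ωᶜ r i = 0 := by unfold restr; split <;> simp [h1]
    rw [h2, h3]; ring
  have hrΩ_le : _root_.enorm (restr Ω r) ≤ _root_.enorm r := by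
    apply le_of_sq_le' (enorm_nonneg' _) (enorm_nonneg' _)
    rw [enorm_restr_sq', enorm_sq']
    exact Finset.sum_le_sum_of_subset_of_nonneg (Finset.subset_univ Ω)
      (fun i _ _ => sq_nonneg _)
  -- ⟨u, w⟩ is supported on T \ Ω
  have huw : ∑ i, u i * restr Ωᶜ r i = ∑ i, restr (T\Ω) u i * restr Ωᶜ r i := by
    apply Finset.sum_congr rfl; intro i _
    by_cases hw0 : restr Ωᶜ r i = 0
    · rw [hw0]; ring
    · have hmem : i ∈ T \ Ω := Finset.mem_sdiff.mpr (hw_supp i hw0)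
      conv_rhs => rw [show restr (T\Ω) u i = u i from by unfold restr; rw [if_pos hmem]]
  have hneg_uw : -(∑ i, u i * restr Ωᶜ r i)
      ≤ ((L₄+U₄)/2 * _root_.enorm r + Real.sqrt (1+U₂) * _root_.enorm e) * _root_.enorm (restr Ωᶜ r) := by
    rw [huw]
    have hcs := (abs_le.mp (cs_abs' (restr (T\Ω) u) (restr Ωᶜ r))).1
    have hmono : _root_.enorm (restr (T\Ω) u) * _root_.enorm (restr Ωᶜ r)
        ≤ ((L₄+U₄)/2 * _root_.enorm r + Real.sqrt (1+U₂) * _root_.enorm e) * _root_.enorm (restr Ωᶜ r) :=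
      mul_le_mul_of_nonneg_right (hsel_le.trans hz_bound) (enorm_nonneg' _)
    linarith
  -- assemble
  have main1 := (h₂ (restr Ωᶜ r) hw_sp).1
  have hAw_sq : _root_.enorm (A.mulVec (restr Ωᶜ r))^2
      = (∑ i, e i * A.mulVec (restr Ωᶜ r) i - ∑ i, u i * restr Ωᶜ r i)
        - ∑ j, A.mulVec (restr Ω r) j * A.mulVec (restr Ωᶜ r) j := by
    have e1 : _root_.enorm (A.mulVec (restr Ωᶜ r))^2
        = ∑ j, A.mulVec r j * A.mulVec (restr Ωᶜ r) j
          - ∑ j, A.mulVec (restr Ω r) j * A.mulVec (restr Ωᶜ r) j := by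
      rw [enorm_sq', ← Finset.sum_sub_distrib]
      apply Finset.sum_congr rfl; intro j _
      rw [hdec j]; ring
    rw [e1]
    have e2 := hu_eq (restr Ωᶜ r)
    linarith
  have h_e_Aw : ∑ i, e i * A.mulVec (restr Ωᶜ r) i
      ≤ Real.sqrt (1+U₂) * _root_.enorm e * _root_.enorm (restr Ωᶜ r) := by
    have := (cs' e _).trans
      (mul_le_mul_of_nonneg_left (hAup _ hw_sp) (enorm_nonneg' e))
    nlinarith [this]
  have h_rΩ : -(∑ j, A.mulVec (restr Ω r) j * A.mulVec (restr Ωᶜ r) j)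
      ≤ (L₂+U₂)/2 * _root_.enorm r * _root_.enorm (restr Ωᶜ r) := by
    have hab := (abs_le.mp (ripIP_abs' h₂ (restr Ω r) (restr Ωᶜ r) hdisj_Ωw hcomb2)).1
    have hmono : (L₂+U₂)/2 * _root_.enorm (restr Ω r) * _root_.enorm (restr Ωᶜ r)
        ≤ (L₂+U₂)/2 * _root_.enorm r * _root_.enorm (restr Ωᶜ r) :=
      mul_le_mul_of_nonneg_right
        (mul_le_mul_of_nonneg_left hrΩ_le (by positivity)) (enorm_nonneg' _)
    linarith
  have hfinal : (1 - L₂) * _root_.enorm (restr Ωᶜ r) ^2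
      ≤ ((L₂+U₂+L₄+U₄)/2 * _root_.enorm r + 2 * Real.sqrt (1+U₂) * _root_.enorm e)
        * _root_.enorm (restr Ωᶜ r) := by
    rw [hAw_sq] at main1
    nlinarith [main1, h_e_Aw, hneg_uw, h_rΩ]
  rcases le_or_gt (_root_.enorm (restr Ωᶜ r)) 0 with hw0 | hw0
  · have hw0' : _root_.enorm (restr Ωᶜ r) = 0 := le_antisymm hw0 (enorm_nonneg' _)
    rw [hw0']
    apply add_nonneg
    · apply mul_nonneg (div_nonneg (by linarith) (by linarith)) (enorm_nonneg' _)
    · apply mul_nonneg (div_nonneg (by positivity) (by linarith)) (enorm_nonneg' _)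
  · have h6 : (1-L₂) * _root_.enorm (restr Ωᶜ r)
      ≤ (L₂+U₂+L₄+U₄)/2 * _root_.enorm r + 2 * Real.sqrt (1+U₂) * _root_.enorm e := by
      apply le_of_mul_le_mul_right _ hw0
      calc (1-L₂) * _root_.enorm (restr Ωᶜ r) * _root_.enorm (restr Ωᶜ r)
          = (1-L₂) * _root_.enorm (restr Ωᶜ r)^2 := by ring
        _ ≤ _ := hfinal
    have h7 : _root_.enorm (restr Ωᶜ r)
        ≤ ((L₂+U₂+L₄+U₄)/2 * _root_.enorm r + 2 * Real.sqrt (1+U₂) * _root_.enorm e) / (1 - L₂) := by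
      rw [le_div_iff₀ h1L]
      linarith [h6]
    have h8 : ((L₂+U₂+L₄+U₄)/2 * _root_.enorm r + 2 * Real.sqrt (1+U₂) * _root_.enorm e) / (1 - L₂)
        = (L₂ + U₂ + L₄ + U₄) / (2 * (1 - L₂)) * _root_.enorm r
          + 2 * Real.sqrt (1 + U₂) / (1 - L₂) * _root_.enorm e :=
      final_div' (L₂+U₂+L₄+U₄) (Real.sqrt (1+U₂)) (_root_.enorm r) (_root_.enorm e) (1-L₂)
        (ne_of_gt h1L)
    rw [h8] at h7
    exact h7
end

section
/- Let x ∈ ℝ^N be k-sparse, let x̃ ∈ ℝ^N be arbitrary, and let T be an index set with |T| = k selecting k largest-magnitude entries of x̃. Then ‖x − x̃_T‖₂ ≤ 2‖x − x̃‖₂. -/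
open Finset Matrix

-- Minkowski inequality for sums of squares, via the Euclidean norm
lemma sqrt_sum_sq_add_le {α : Type*} [Fintype α] (u v : α → ℝ) :
    Real.sqrt (∑ i, (u i + v i) ^ 2) ≤
      Real.sqrt (∑ i, (u i) ^ 2) + Real.sqrt (∑ i, (v i) ^ 2) := by
  have key : ∀ w : α → ℝ, Real.sqrt (∑ i, (w i) ^ 2)
      = ‖(WithLp.equiv 2 (α → ℝ)).symm w‖ := by
    intro w
    rw [EuclideanSpace.norm_eq]
    simp [sq_abs]
  rw [key, key, key]
  exact norm_add_le _ _

lemma sum_sq_restr {N : ℕ} (I : Finset (Fin N)) (w : Fin N → ℝ) :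
    ∑ i, (restr I w i) ^ 2 = ∑ i ∈ I, (w i) ^ 2 := by
  simp only [restr, apply_ite (· ^ 2)]
  simp [Finset.sum_ite_mem]

theorem stmt12 {N k : ℕ} (x : Fin N → ℝ) (hx : sparse k x)
    (xt : Fin N → ℝ) (T : Finset (Fin N)) (hTcard : T.card = k) (hTsel : selects T xt) :
    _root_.enorm (fun i => x i - restr T xt i) ≤ 2 * _root_.enorm (fun i => x i - xt i) := by
  classical
  set S : Finset (Fin N) := Finset.univ.filter fun i => x i ≠ 0 with hSdef
  have hxS : ∀ i, i ∉ S → x i = 0 := by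
    intro i hi
    by_contra h
    exact hi (by simp [hSdef, h])
  set a2 : ℝ := ∑ i ∈ T, (x i - xt i) ^ 2 with ha2
  set b2 : ℝ := ∑ i ∈ Tᶜ, (x i - xt i) ^ 2 with hb2
  set c2 : ℝ := ∑ i ∈ S \ T, (x i) ^ 2 with hc2
  have ha2nn : 0 ≤ a2 := Finset.sum_nonneg fun _ _ => sq_nonneg _
  have hb2nn : 0 ≤ b2 := Finset.sum_nonneg fun _ _ => sq_nonneg _
  have hc2nn : 0 ≤ c2 := Finset.sum_nonneg fun _ _ => sq_nonneg _
  -- RHS decomposition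
  have hRHS : ∑ i, (x i - xt i) ^ 2 = a2 + b2 := by
    rw [ha2, hb2, Finset.sum_add_sum_compl]
  -- LHS decomposition
  have hLHS : ∑ i, (x i - restr T xt i) ^ 2 = a2 + c2 := by
    rw [← Finset.sum_add_sum_compl T]
    congr 1
    · exact Finset.sum_congr rfl fun i hi => by simp [restr, hi]
    · have h1 : ∑ i ∈ Tᶜ, (x i - restr T xt i) ^ 2 = ∑ i ∈ Tᶜ, (x i) ^ 2 :=
        Finset.sum_congr rfl fun i hi => by
          simp [restr, (Finset.mem_compl.mp hi)]
      rw [h1, hc2]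
      refine (Finset.sum_subset ?_ ?_).symm
      · intro i hi
        exact Finset.mem_compl.mpr (Finset.mem_sdiff.mp hi).2
      · intro i hi hni
        have : x i = 0 := by
          apply hxS
          intro hiS
          exact hni (Finset.mem_sdiff.mpr ⟨hiS, Finset.mem_compl.mp hi⟩)
        simp [this]
  -- cardinality comparison
  have hScard : S.card ≤ T.card := by rw [hTcard]; exact hx
  have hcard : (S \ T).card ≤ (T \ S).card := by
    have h1 := Finset.card_inter_add_card_sdiff S T
    have h2 := Finset.card_inter_add_card_sdiff T S
    rw [Finset.inter_comm] at h2
    omega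
  obtain ⟨t', ht'sub, ht'card⟩ := Finset.le_card_iff_exists_subset_card.mp hcard
  -- pairing: small entries outside T dominated by entries in T \ S
  have hd : ∑ j ∈ S \ T, (xt j) ^ 2 ≤ ∑ i ∈ T \ S, (xt i) ^ 2 := by
    have e : ((S \ T : Finset (Fin N)) : Type) ≃ t' := Finset.equivOfCardEq ht'card.symm
    calc ∑ j ∈ S \ T, (xt j) ^ 2 = ∑ j : (S \ T : Finset (Fin N)), (xt j) ^ 2 :=
          (Finset.sum_coe_sort _ _).symm
      _ ≤ ∑ j : (S \ T : Finset (Fin N)), (xt (e j : Fin N)) ^ 2 := by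
          apply Finset.sum_le_sum
          intro j _
          have hjT : (j : Fin N) ∉ T := (Finset.mem_sdiff.mp j.2).2
          have hiT : ((e j : Fin N)) ∈ T := (Finset.mem_sdiff.mp (ht'sub (e j).2)).1
          have habs := hTsel _ hiT _ hjT
          calc (xt j) ^ 2 = |xt (j : Fin N)| ^ 2 := (sq_abs _).symm
            _ ≤ |xt (e j : Fin N)| ^ 2 := by gcongr
            _ = (xt (e j : Fin N)) ^ 2 := sq_abs _
      _ = ∑ i : t', (xt i) ^ 2 := e.sum_comp fun i => (xt (i : Fin N)) ^ 2
      _ = ∑ i ∈ t', (xt i) ^ 2 := Finset.sum_coe_sort t' (fun i => (xt i) ^ 2)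
      _ ≤ ∑ i ∈ T \ S, (xt i) ^ 2 :=
          Finset.sum_le_sum_of_subset_of_nonneg ht'sub fun _ _ _ => sq_nonneg _
  have hTS : ∑ i ∈ T \ S, (xt i) ^ 2 ≤ a2 := by
    calc ∑ i ∈ T \ S, (xt i) ^ 2 = ∑ i ∈ T \ S, (x i - xt i) ^ 2 :=
          Finset.sum_congr rfl fun i hi => by
            rw [hxS i (Finset.mem_sdiff.mp hi).2]; ring
      _ ≤ a2 := Finset.sum_le_sum_of_subset_of_nonneg (Finset.sdiff_subset)
          fun _ _ _ => sq_nonneg _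
  -- Minkowski step
  have hmink : Real.sqrt c2 ≤ Real.sqrt b2 + Real.sqrt a2 := by
    set u : Fin N → ℝ := restr (S \ T) (fun i => x i - xt i) with hu
    set v : Fin N → ℝ := restr (S \ T) xt with hv
    have huv : ∀ i, u i + v i = restr (S \ T) x i := by
      intro i
      simp only [hu, hv, restr]
      split <;> ring
    have h1 : Real.sqrt c2 = Real.sqrt (∑ i, (u i + v i) ^ 2) := by
      congr 1
      simp only [huv]
      rw [sum_sq_restr]
    have h2 : ∑ i, (u i) ^ 2 ≤ b2 := by
      rw [hu, sum_sq_restr]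
      exact Finset.sum_le_sum_of_subset_of_nonneg
        (fun i hi => Finset.mem_compl.mpr (Finset.mem_sdiff.mp hi).2)
        fun _ _ _ => sq_nonneg _
    have h3 : ∑ i, (v i) ^ 2 ≤ a2 := by
      rw [hv, sum_sq_restr]
      exact le_trans hd hTS
    calc Real.sqrt c2 = Real.sqrt (∑ i, (u i + v i) ^ 2) := h1
      _ ≤ Real.sqrt (∑ i, (u i) ^ 2) + Real.sqrt (∑ i, (v i) ^ 2) :=
          sqrt_sum_sq_add_le u v
      _ ≤ Real.sqrt b2 + Real.sqrt a2 :=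
          add_le_add (Real.sqrt_le_sqrt h2) (Real.sqrt_le_sqrt h3)
  -- final algebra
  set sa := Real.sqrt a2 with hsa
  set sb := Real.sqrt b2 with hsb
  set sc := Real.sqrt c2 with hsc
  have hsann : 0 ≤ sa := Real.sqrt_nonneg _
  have hsbnn : 0 ≤ sb := Real.sqrt_nonneg _
  have hscnn : 0 ≤ sc := Real.sqrt_nonneg _
  have ea : a2 = sa ^ 2 := (Real.sq_sqrt ha2nn).symm
  have eb : b2 = sb ^ 2 := (Real.sq_sqrt hb2nn).symm
  have ec : c2 = sc ^ 2 := (Real.sq_sqrt hc2nn).symm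
  have hsc2 : sc ^ 2 ≤ (sb + sa) ^ 2 := pow_le_pow_left₀ hscnn hmink 2
  have hmain : a2 + c2 ≤ 4 * (a2 + b2) := by
    rw [ea, eb, ec]
    nlinarith [sq_nonneg (sa - sb)]
  rw [_root_.enorm, _root_.enorm, hLHS, hRHS]
  calc Real.sqrt (a2 + c2) ≤ Real.sqrt (4 * (a2 + b2)) := Real.sqrt_le_sqrt hmain
    _ = 2 * Real.sqrt (a2 + b2) := by
        rw [show (4 : ℝ) = 2 ^ 2 by norm_num, Real.sqrt_mul (by positivity),
          Real.sqrt_sq (by norm_num)]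
end
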